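/- Let X be a real Hilbert space, let m ≥ 2, and for each i ∈ {1,…,m} let T_i : X → X be firmly nonexpansive, and let v_i denote the minimal displacement vector of T_i (the minimal-norm element of the closure of the range of Id − T_i). Then for every ε > 0 there exists x ∈ X such that ‖x − T_m T_{m−1} ⋯ T_1 x‖ ≤ ε + ∑_{k=1}^{m} ‖v_k‖. -/

import Mathlib

/-- Composition `T (m-1) ∘ ⋯ ∘ T 1 ∘ T 0` applied to `x` (apply `T 0` first),
so that with `T i` playing the role of `T_{i+1}` this is `T_m T_{m-1} ⋯ T_1 x`. -/
def compSeq {X : Type*} (m : ℕ) (T : Fin m → X → X) : X → X :=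
  fun x => (List.ofFn T).foldl (fun y f => f y) x

noncomputable section FNEaux

variable {X : Type*} [NormedAddCommGroup X] [InnerProductSpace ℝ X]

def foldApp (L : List (X → X)) (x : X) : X := L.foldl (fun y f => f y) x

@[simp] lemma foldApp_nil (x : X) : foldApp ([] : List (X → X)) x = x := rfl

@[simp] lemma foldApp_cons (f : X → X) (L : List (X → X)) (x : X) :
    foldApp (f :: L) x = foldApp L (f x) := rfl

def FNE (f : X → X) : Prop := ∀ x y : X, ‖f x - f y‖ ^ 2 ≤ (inner ℝ (x - y) (f x - f y) : ℝ)

lemma FNE.nonexp {f : X → X} (hf : FNE f) (x y : X) : ‖f x - f y‖ ≤ ‖x - y‖ := by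
  have h := hf x y
  have h2 : (inner ℝ (x - y) (f x - f y) : ℝ) ≤ ‖x - y‖ * ‖f x - f y‖ := real_inner_le_norm _ _
  nlinarith [norm_nonneg (f x - f y), norm_nonneg (x - y)]

lemma gstep {f : X → X} (hf : FNE f) {p : X} {δ : ℝ}
    (hp : ‖p - f p‖ ≤ δ) (y : X) : ‖f y‖ ≤ ‖y‖ + 2 * ‖p‖ + δ := by
  have h1 : ‖f y - f p‖ ≤ ‖y - p‖ := hf.nonexp y p
  have h2 : ‖f y‖ ≤ ‖f y - f p‖ + ‖f p - p‖ + ‖p‖ := by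
    have hfy : f y = (f y - f p) + (f p - p) + p := by abel
    calc ‖f y‖ = ‖(f y - f p) + (f p - p) + p‖ := by rw [← hfy]
      _ ≤ _ := by
        refine le_trans (norm_add_le _ _) ?_
        gcongr
        exact norm_add_le _ _
  have h3 : ‖f p - p‖ = ‖p - f p‖ := norm_sub_rev _ _
  have h4 : ‖y - p‖ ≤ ‖y‖ + ‖p‖ := norm_sub_le _ _
  linarith

lemma pstep {f : X → X} (hf : FNE f) {p : X} {δ : ℝ} (hδ : 0 ≤ δ)
    (hp : ‖p - f p‖ ≤ δ) (y : X) :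
    ‖f y‖ ^ 2 ≤ ‖y‖ ^ 2 + ‖p‖ ^ 2 + 2 * δ * (‖f y - p‖ + ‖y - f y‖) + 6 * δ ^ 2 := by
  set u := f y - f p with hu
  set d := y - p with hd
  set e := p - f p with he
  have h1 : ‖u‖ ^ 2 ≤ (inner ℝ d u : ℝ) := hf y p
  have h2 : ‖d - u‖ ^ 2 = ‖d‖ ^ 2 - 2 * (inner ℝ d u : ℝ) + ‖u‖ ^ 2 := norm_sub_sq_real d u
  have h3 : ‖u‖ ^ 2 + ‖d - u‖ ^ 2 ≤ ‖d‖ ^ 2 := by linarith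
  have e4 : f y - p = u + -e := by simp [hu, he]
  have h4 : ‖f y - p‖ ≤ ‖u‖ + δ := by
    rw [e4]
    refine le_trans (norm_add_le _ _) ?_
    rw [norm_neg]; linarith
  have h4' : ‖u‖ ≤ ‖f y - p‖ + δ := by
    have : u = (f y - p) + e := by simp [hu, he]
    rw [this]
    refine le_trans (norm_add_le _ _) ?_
    linarith
  have e5 : y - f y = (d - u) + e := by simp [hu, hd, he]; abel
  have h5 : ‖y - f y‖ ≤ ‖d - u‖ + δ := by
    rw [e5]; refine le_trans (norm_add_le _ _) ?_; linarith
  have h5' : ‖d - u‖ ≤ ‖y - f y‖ + δ := by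
    have : d - u = (y - f y) + -e := by rw [e5]; abel
    rw [this]
    refine le_trans (norm_add_le _ _) ?_
    rw [norm_neg]; linarith
  -- squares
  have s4 : ‖f y - p‖ ^ 2 ≤ ‖u‖ ^ 2 + 2 * δ * (‖f y - p‖ + δ) + δ ^ 2 := by
    nlinarith [norm_nonneg (f y - p), norm_nonneg u, h4, h4']
  have s5 : ‖y - f y‖ ^ 2 ≤ ‖d - u‖ ^ 2 + 2 * δ * (‖y - f y‖ + δ) + δ ^ 2 := by
    nlinarith [norm_nonneg (y - f y), norm_nonneg (d - u), h5, h5']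
  have hA : ‖f y - p‖ ^ 2 + ‖y - f y‖ ^ 2 ≤ ‖d‖ ^ 2 + 2 * δ * (‖f y - p‖ + ‖y - f y‖) + 6 * δ ^ 2 := by
    nlinarith [h3]
  have h6 : ‖d‖ ^ 2 = ‖y‖ ^ 2 - 2 * (inner ℝ y p : ℝ) + ‖p‖ ^ 2 := norm_sub_sq_real y p
  have h7 : ‖f y - p‖ ^ 2 = ‖f y‖ ^ 2 - 2 * (inner ℝ (f y) p : ℝ) + ‖p‖ ^ 2 := norm_sub_sq_real (f y) p
  have h8 : (inner ℝ (y - f y) p : ℝ) = (inner ℝ y p : ℝ) - (inner ℝ (f y) p : ℝ) := inner_sub_left _ _ _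
  have h9 : (inner ℝ (y - f y) p : ℝ) ≤ ‖y - f y‖ * ‖p‖ := real_inner_le_norm _ _
  have h9' : (inner ℝ (f y - y) p : ℝ) ≤ ‖y - f y‖ * ‖p‖ := by
    rw [← norm_sub_rev (f y) y]; exact real_inner_le_norm _ _
  have h8' : (inner ℝ (f y - y) p : ℝ) = (inner ℝ (f y) p : ℝ) - (inner ℝ y p : ℝ) := inner_sub_left _ _ _
  have hB : ‖f y‖ ^ 2 + ‖y - f y‖ ^ 2 ≤
      ‖y‖ ^ 2 + 2 * (‖y - f y‖ * ‖p‖) + 2 * δ * (‖f y - p‖ + ‖y - f y‖) + 6 * δ ^ 2 := by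
    linarith
  nlinarith [sq_nonneg (‖y - f y‖ - ‖p‖), hB]


lemma foldApp_nonexp : ∀ L : List (X → X), (∀ f ∈ L, FNE f) →
    ∀ a b : X, ‖foldApp L a - foldApp L b‖ ≤ ‖a - b‖ := by
  intro L
  induction L with
  | nil => intro _ a b; simp
  | cons f L ih =>
    intro h a b
    have hf : FNE f := h f (List.mem_cons_self)
    have hL : ∀ g ∈ L, FNE g := fun g hg => h g (List.mem_cons_of_mem _ hg)
    calc ‖foldApp (f :: L) a - foldApp (f :: L) b‖ = ‖foldApp L (f a) - foldApp L (f b)‖ := by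
          simp
      _ ≤ ‖f a - f b‖ := ih hL _ _
      _ ≤ ‖a - b‖ := hf.nonexp a b

lemma foldApp_growth (P : (X → X) → X) (δ C : ℝ) (hδ : 0 ≤ δ) (hC : 0 ≤ C) :
    ∀ L : List (X → X), (∀ f ∈ L, FNE f ∧ ‖P f - f (P f)‖ ≤ δ ∧ ‖P f‖ ≤ C) →
    ∀ a : X, ‖foldApp L a‖ ≤ ‖a‖ + L.length * (2 * C + δ) := by
  intro L
  induction L with
  | nil => intro _ a; simp
  | cons f L ih =>
    intro h a
    obtain ⟨hf, hpf, hcf⟩ := h f (List.mem_cons_self)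
    have hL := fun g hg => h g (List.mem_cons_of_mem f hg)
    have h1 : ‖f a‖ ≤ ‖a‖ + 2 * C + δ := by
      have := gstep hf hpf a
      linarith
    have h2 := ih hL (f a)
    have hlen : ((f :: L).length : ℝ) = (L.length : ℝ) + 1 := by
      simp [List.length_cons]
    calc ‖foldApp (f :: L) a‖ = ‖foldApp L (f a)‖ := by simp
      _ ≤ ‖f a‖ + L.length * (2 * C + δ) := h2
      _ ≤ ‖a‖ + 2 * C + δ + L.length * (2 * C + δ) := by linarith
      _ = ‖a‖ + ((L.length : ℝ) + 1) * (2 * C + δ) := by ring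
      _ = ‖a‖ + ((f :: L).length : ℝ) * (2 * C + δ) := by rw [hlen]

lemma foldApp_chain (P : (X → X) → X) (δ C M : ℝ) (hδ : 0 ≤ δ) (hC : 0 ≤ C) (hCM : C ≤ M) :
    ∀ L : List (X → X), (∀ f ∈ L, FNE f ∧ ‖P f - f (P f)‖ ≤ δ ∧ ‖P f‖ ≤ C) →
    ∀ a : X, ‖a‖ + L.length * (2 * C + δ) ≤ M →
    ‖foldApp L a‖ ^ 2 ≤ ‖a‖ ^ 2 + L.length * (C ^ 2 + 8 * δ * M + 6 * δ ^ 2) := by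
  intro L
  induction L with
  | nil => intro _ a _; simp
  | cons f L ih =>
    intro h a hM
    obtain ⟨hf, hpf, hcf⟩ := h f (List.mem_cons_self)
    have hL := fun g hg => h g (List.mem_cons_of_mem f hg)
    have hlen : ((f :: L).length : ℝ) = (L.length : ℝ) + 1 := by
      simp [List.length_cons]
    have hlenN : (0:ℝ) ≤ (L.length : ℝ) := by positivity
    have hfa : ‖f a‖ ≤ ‖a‖ + 2 * C + δ := by
      have := gstep hf hpf a
      linarith
    have hM0 : ‖a‖ + ((L.length : ℝ) + 1) * (2 * C + δ) ≤ M := by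
      rw [← hlen]; exact hM
    have haM : ‖a‖ ≤ M := by nlinarith
    have hfaM : ‖f a‖ ≤ M := by nlinarith
    have hM' : ‖f a‖ + L.length * (2 * C + δ) ≤ M := by nlinarith
    have h2 := ih hL (f a) hM'
    have h1 := pstep hf hδ hpf a
    have hb1 : ‖f a - P f‖ ≤ 2 * M := by
      have := norm_sub_le (f a) (P f)
      linarith
    have hb2 : ‖a - f a‖ ≤ 2 * M := by
      have := norm_sub_le a (f a)
      linarith
    have hp2 : ‖P f‖ ^ 2 ≤ C ^ 2 := by nlinarith [norm_nonneg (P f)]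
    have h1' : ‖f a‖ ^ 2 ≤ ‖a‖ ^ 2 + C ^ 2 + 8 * δ * M + 6 * δ ^ 2 := by nlinarith
    calc ‖foldApp (f :: L) a‖ ^ 2 = ‖foldApp L (f a)‖ ^ 2 := by simp
      _ ≤ ‖f a‖ ^ 2 + L.length * (C ^ 2 + 8 * δ * M + 6 * δ ^ 2) := h2
      _ ≤ ‖a‖ ^ 2 + ((L.length : ℝ) + 1) * (C ^ 2 + 8 * δ * M + 6 * δ ^ 2) := by linarith
      _ = ‖a‖ ^ 2 + ((f :: L).length : ℝ) * (C ^ 2 + 8 * δ * M + 6 * δ ^ 2) := by rw [hlen]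


set_option maxHeartbeats 4000000 in
lemma key [CompleteSpace X] (L : List (X → X)) (hF : ∀ f ∈ L, FNE f)
    (hap : ∀ f ∈ L, ∀ δ : ℝ, 0 < δ → ∃ p : X, ‖p - f p‖ ≤ δ)
    (ε : ℝ) (hε : 0 < ε) : ∃ x : X, ‖x - foldApp L x‖ ≤ ε := by
  classical
  obtain ⟨m, hm⟩ : ∃ m : ℝ, m = (L.length : ℝ) := ⟨_, rfl⟩
  have hm0 : 0 ≤ m := by rw [hm]; positivity
  obtain ⟨G, hG⟩ : ∃ G : ℝ, G = ‖foldApp L (0 : X)‖ := ⟨_, rfl⟩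
  have hG0 : 0 ≤ G := by rw [hG]; exact norm_nonneg _
  obtain ⟨δ, hδdef⟩ : ∃ δ : ℝ, δ = ε ^ 2 / (16 * (m + 1) * (G + 1)) := ⟨_, rfl⟩
  have hδ : 0 < δ := by rw [hδdef]; positivity
  obtain ⟨P, hP⟩ : ∃ P : (X → X) → X, ∀ f ∈ L, ‖P f - f (P f)‖ ≤ δ := by
    refine ⟨fun f => if h : ∃ p : X, ‖p - f p‖ ≤ δ then h.choose else 0, ?_⟩
    intro f hf
    have h : ∃ p : X, ‖p - f p‖ ≤ δ := hap f hf δ hδ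
    simp only [dif_pos h]
    exact h.choose_spec
  obtain ⟨C, hCdef⟩ : ∃ C : ℝ, C = 1 + (L.map (fun f => ‖P f‖)).sum := ⟨_, rfl⟩
  have hsum0 : 0 ≤ (L.map (fun f => ‖P f‖)).sum :=
    List.sum_nonneg (by intro x hx; obtain ⟨f, _, rfl⟩ := List.mem_map.1 hx; exact norm_nonneg _)
  have hC1 : 1 ≤ C := by rw [hCdef]; linarith
  have hC0 : 0 ≤ C := by linarith
  have hCb : ∀ f ∈ L, ‖P f‖ ≤ C := by
    intro f hf
    have hmem : ‖P f‖ ∈ L.map (fun f => ‖P f‖) := List.mem_map_of_mem hf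
    have := List.single_le_sum (l := L.map (fun f => ‖P f‖))
      (by intro x hx; obtain ⟨g, _, rfl⟩ := List.mem_map.1 hx; exact norm_nonneg _) _ hmem
    rw [hCdef]; linarith
  have hGood : ∀ f ∈ L, FNE f ∧ ‖P f - f (P f)‖ ≤ δ ∧ ‖P f‖ ≤ C :=
    fun f hf => ⟨hF f hf, hP f hf, hCb f hf⟩
  obtain ⟨A, hAdef⟩ : ∃ A : ℝ,
      A = (m + 1) * (C ^ 2 + 6 * δ ^ 2 + 8 * δ * ((m + 1) * (2 * C + δ) + C)) := ⟨_, rfl⟩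
  have hA0 : 0 < A := by rw [hAdef]; positivity
  obtain ⟨μ, hμdef⟩ : ∃ μ : ℝ, μ = min (1 / 2) (ε ^ 2 / (4 * A)) := ⟨_, rfl⟩
  have hμ0 : 0 < μ := by rw [hμdef]; exact lt_min (by norm_num) (by positivity)
  have hμh : μ ≤ 1 / 2 := by rw [hμdef]; exact min_le_left _ _
  have hμA : μ * A ≤ ε ^ 2 / 4 := by
    have h1 : μ ≤ ε ^ 2 / (4 * A) := by rw [hμdef]; exact min_le_right _ _
    calc μ * A ≤ (ε ^ 2 / (4 * A)) * A := mul_le_mul_of_nonneg_right h1 (le_of_lt hA0)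
      _ = ε ^ 2 / 4 := by field_simp
  have hμ1 : μ ≤ 1 := by linarith
  have hlam0 : (0:ℝ) ≤ 1 - μ := by linarith
  haveI : Nonempty X := ⟨0⟩
  set g : X → X := fun x => (1 - μ : ℝ) • foldApp L x with hgdef
  have hlip : LipschitzWith ⟨1 - μ, hlam0⟩ g := by
    apply LipschitzWith.of_dist_le_mul
    intro a b
    simp only [hgdef, dist_eq_norm]
    rw [← smul_sub, norm_smul, Real.norm_eq_abs, abs_of_nonneg hlam0]
    have h1 := foldApp_nonexp L hF a b
    exact mul_le_mul_of_nonneg_left h1 hlam0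
  have hcontr : ContractingWith ⟨1 - μ, hlam0⟩ g := by
    constructor
    · show @LT.lt NNReal _ ⟨1 - μ, hlam0⟩ 1
      refine NNReal.coe_lt_coe.1 ?_
      exact (by linarith : (1:ℝ) - μ < 1)
    · exact hlip
  obtain ⟨x, hfix⟩ : ∃ x : X, g x = x :=
    ⟨ContractingWith.fixedPoint g hcontr, hcontr.fixedPoint_isFixedPt⟩
  obtain ⟨z, hzdef⟩ : ∃ z : X, z = foldApp L x := ⟨_, rfl⟩
  have hxz : x = (1 - μ) • z := by
    rw [hzdef]
    conv_lhs => rw [← hfix]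
  clear hfix hlip hcontr hgdef
  clear g
  have hxnorm : ‖x‖ = (1 - μ) * ‖z‖ := by
    rw [hxz, norm_smul, Real.norm_eq_abs, abs_of_nonneg hlam0]
  have hzG : μ * ‖z‖ ≤ G := by
    have h1 : ‖foldApp L x - foldApp L 0‖ ≤ ‖x - 0‖ := foldApp_nonexp L hF x 0
    rw [← hzdef, sub_zero] at h1
    have h2 : ‖z‖ ≤ ‖z - foldApp L 0‖ + ‖foldApp L 0‖ := by
      calc ‖z‖ = ‖(z - foldApp L 0) + foldApp L 0‖ := by rw [sub_add_cancel]
        _ ≤ _ := norm_add_le _ _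
    rw [← hG] at h2
    have h3 : ‖z‖ ≤ (1 - μ) * ‖z‖ + G := by
      rw [← hxnorm]; linarith
    have e : (1 - μ) * ‖z‖ = ‖z‖ - μ * ‖z‖ := by ring
    linarith [e, h3]
  obtain ⟨M, hMdef⟩ : ∃ M : ℝ, M = G / μ + (m + 1) * (2 * C + δ) + C := ⟨_, rfl⟩
  have hGμ : 0 ≤ G / μ := by positivity
  have hCM : C ≤ M := by
    rw [hMdef]
    have h2 : 0 ≤ (m + 1) * (2 * C + δ) := by positivity
    linarith
  have hxM : ‖x‖ + m * (2 * C + δ) ≤ M := by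
    have hμz0 : 0 ≤ μ * ‖z‖ := mul_nonneg (le_of_lt hμ0) (norm_nonneg z)
    have h1 : ‖x‖ ≤ G / μ := by
      rw [hxnorm, le_div_iff₀ hμ0]
      have e : (1 - μ) * ‖z‖ * μ = μ * ‖z‖ - μ * (μ * ‖z‖) := by ring
      have e2 : 0 ≤ μ * (μ * ‖z‖) := mul_nonneg (le_of_lt hμ0) hμz0
      linarith [hzG]
    have h2 : m * (2 * C + δ) ≤ (m + 1) * (2 * C + δ) :=
      mul_le_mul_of_nonneg_right (by linarith) (by linarith)
    rw [hMdef]; linarith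
  have hxM' : ‖x‖ + (L.length : ℝ) * (2 * C + δ) ≤ M := by rw [← hm]; exact hxM
  have hchain0 := foldApp_chain P δ C M (le_of_lt hδ) hC0 hCM L hGood x hxM'
  have hchain : ‖z‖ ^ 2 ≤ ‖x‖ ^ 2 + m * (C ^ 2 + 8 * δ * M + 6 * δ ^ 2) := by
    rw [hzdef, hm]; exact hchain0
  have hE : μ * ‖z‖ ^ 2 ≤ m * (C ^ 2 + 8 * δ * M + 6 * δ ^ 2) := by
    have hx2 : ‖x‖ ^ 2 = ‖z‖ ^ 2 - 2 * (μ * ‖z‖ ^ 2) + μ ^ 2 * ‖z‖ ^ 2 := by rw [hxnorm]; ring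
    have hμμ : μ ^ 2 ≤ μ := by rw [sq]; exact mul_le_of_le_one_left (le_of_lt hμ0) hμ1
    have hbc : μ ^ 2 * ‖z‖ ^ 2 ≤ μ * ‖z‖ ^ 2 := mul_le_mul_of_nonneg_right hμμ (sq_nonneg _)
    linarith
  have hs : ‖x - z‖ = μ * ‖z‖ := by
    have h0 : x - z = (-μ) • z := by
      calc x - z = (1 - μ) • z - (1:ℝ) • z := by rw [hxz, one_smul]
        _ = ((1 - μ) - 1) • z := (sub_smul _ _ _).symm
        _ = (-μ) • z := by norm_num
    rw [h0, norm_smul, Real.norm_eq_abs, abs_neg, abs_of_nonneg (le_of_lt hμ0)]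
  have hs2 : ‖x - z‖ ^ 2 ≤ ε ^ 2 * (3 / 4) := by
    have h0 : ‖x - z‖ ^ 2 = μ * (μ * ‖z‖ ^ 2) := by rw [hs]; ring
    have h1 : ‖x - z‖ ^ 2 ≤ μ * (m * (C ^ 2 + 8 * δ * M + 6 * δ ^ 2)) := by
      rw [h0]; exact mul_le_mul_of_nonneg_left hE (le_of_lt hμ0)
    have hB2 : (0:ℝ) ≤ 8 * δ * ((m + 1) * (2 * C + δ) + C) := by positivity
    have hB1 : (0:ℝ) ≤ C ^ 2 + 6 * δ ^ 2 := by positivity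
    have hMsplit : μ * M = G + μ * ((m + 1) * (2 * C + δ) + C) := by
      rw [hMdef]
      have hq : μ * (G / μ) = G := by field_simp
      calc μ * (G / μ + (m + 1) * (2 * C + δ) + C)
          = μ * (G / μ) + μ * ((m + 1) * (2 * C + δ) + C) := by ring
        _ = G + μ * ((m + 1) * (2 * C + δ) + C) := by rw [hq]
    have e3 : m * (C ^ 2 + 6 * δ ^ 2) + m * (8 * δ * ((m + 1) * (2 * C + δ) + C)) ≤ A := by
      rw [hAdef]
      have g1 : m * (C ^ 2 + 6 * δ ^ 2) ≤ (m + 1) * (C ^ 2 + 6 * δ ^ 2) :=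
        mul_le_mul_of_nonneg_right (by linarith) hB1
      have g2 : m * (8 * δ * ((m + 1) * (2 * C + δ) + C))
          ≤ (m + 1) * (8 * δ * ((m + 1) * (2 * C + δ) + C)) :=
        mul_le_mul_of_nonneg_right (by linarith) hB2
      calc m * (C ^ 2 + 6 * δ ^ 2) + m * (8 * δ * ((m + 1) * (2 * C + δ) + C))
          ≤ (m + 1) * (C ^ 2 + 6 * δ ^ 2) + (m + 1) * (8 * δ * ((m + 1) * (2 * C + δ) + C)) := by
            linarith
        _ = (m + 1) * (C ^ 2 + 6 * δ ^ 2 + 8 * δ * ((m + 1) * (2 * C + δ) + C)) := by ring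
    have e3' := mul_le_mul_of_nonneg_left e3 (le_of_lt hμ0)
    have e1 : μ * (m * (C ^ 2 + 8 * δ * M + 6 * δ ^ 2))
        = μ * (m * (C ^ 2 + 6 * δ ^ 2)) + 8 * m * δ * (μ * M) := by ring
    have e2 : 8 * m * δ * (μ * M)
        = 8 * m * δ * G + μ * (m * (8 * δ * ((m + 1) * (2 * C + δ) + C))) := by
      rw [hMsplit]; ring
    have h6 : μ * (m * (C ^ 2 + 8 * δ * M + 6 * δ ^ 2)) ≤ μ * A + 8 * m * δ * G := by
      rw [e1, e2]
      have h7 : μ * (m * (C ^ 2 + 6 * δ ^ 2))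
          + μ * (m * (8 * δ * ((m + 1) * (2 * C + δ) + C))) ≤ μ * A := by
        calc μ * (m * (C ^ 2 + 6 * δ ^ 2)) + μ * (m * (8 * δ * ((m + 1) * (2 * C + δ) + C)))
            = μ * (m * (C ^ 2 + 6 * δ ^ 2) + m * (8 * δ * ((m + 1) * (2 * C + δ) + C))) := by ring
          _ ≤ μ * A := e3'
      linarith
    have h5 : 8 * m * δ * G ≤ ε ^ 2 / 2 := by
      have hδval : δ * (16 * (m + 1) * (G + 1)) = ε ^ 2 := by
        rw [hδdef]; field_simp
      have k0 : m * G ≤ (m + 1) * (G + 1) := by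
        have e : (m + 1) * (G + 1) = m * G + m + G + 1 := by ring
        linarith [e, hm0, hG0]
      have k1 : 8 * δ * (m * G) ≤ 8 * δ * ((m + 1) * (G + 1)) :=
        mul_le_mul_of_nonneg_left k0 (by positivity)
      have k2 : 8 * m * δ * G = 8 * δ * (m * G) := by ring
      have k3 : 8 * δ * ((m + 1) * (G + 1)) = ε ^ 2 / 2 := by
        rw [← hδval]; ring
      linarith
    calc ‖x - z‖ ^ 2 ≤ μ * A + 8 * m * δ * G := le_trans h1 h6
      _ ≤ ε ^ 2 / 4 + ε ^ 2 / 2 := by linarith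
      _ = ε ^ 2 * (3 / 4) := by ring
  refine ⟨x, ?_⟩
  rw [← hzdef]
  have hnn : 0 ≤ ‖x - z‖ := norm_nonneg _
  clear * - hnn hs2 hε
  nlinarith [hs2, hnn, hε]

lemma cmpFold : ∀ (W : List ((X → X) × X)),
    (∀ q ∈ W, ∀ x y : X, ‖q.1 x - q.1 y‖ ≤ ‖x - y‖) →
    ∀ a b : X, ‖foldApp (W.map (fun q => fun x => q.1 x + q.2)) a - foldApp (W.map Prod.fst) b‖
      ≤ ‖a - b‖ + (W.map (fun q => ‖q.2‖)).sum := by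
  intro W
  induction W with
  | nil => intro _ a b; simp
  | cons q W ih =>
    intro h a b
    have hq := h q (List.mem_cons_self)
    have hW := fun r hr => h r (List.mem_cons_of_mem q hr)
    have step : ‖(q.1 a + q.2) - q.1 b‖ ≤ ‖a - b‖ + ‖q.2‖ := by
      have e : (q.1 a + q.2) - q.1 b = (q.1 a - q.1 b) + q.2 := by abel
      rw [e]
      exact le_trans (norm_add_le _ _) (by linarith [hq a b])
    have hih := ih hW (q.1 a + q.2) (q.1 b)
    simp only [List.map_cons, foldApp_cons, List.sum_cons] at *
    linarith

end FNEaux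


theorem stmt_0 {X : Type*} [NormedAddCommGroup X] [InnerProductSpace ℝ X] [CompleteSpace X]
    (m : ℕ) (hm : 2 ≤ m) (T : Fin m → X → X)
    (hT : ∀ i, ∀ x y : X, ‖T i x - T i y‖ ^ 2 ≤ (inner ℝ (x - y) (T i x - T i y) : ℝ))
    (v : Fin m → X)
    (hv : ∀ i, v i ∈ closure (Set.range (fun x => x - T i x)))
    (hvmin : ∀ i, ∀ w ∈ closure (Set.range (fun x => x - T i x)), ‖v i‖ ≤ ‖w‖)
    (ε : ℝ) (hε : 0 < ε) :
    ∃ x : X, ‖x - compSeq m T x‖ ≤ ε + ∑ i, ‖v i‖ := by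
  classical
  set That : Fin m → X → X := fun i => fun x => T i x + v i with hThat
  have hFNEi : ∀ i, FNE (That i) := by
    intro i x y
    show ‖(T i x + v i) - (T i y + v i)‖ ^ 2 ≤ (inner ℝ (x - y) ((T i x + v i) - (T i y + v i)) : ℝ)
    rw [add_sub_add_right_eq_sub]
    exact hT i x y
  have hFNE : ∀ f ∈ List.ofFn That, FNE f := by
    intro f hf
    obtain ⟨i, rfl⟩ := Set.mem_range.1 ((List.mem_ofFn).1 hf)
    exact hFNEi i
  have hap : ∀ f ∈ List.ofFn That, ∀ δ : ℝ, 0 < δ → ∃ p : X, ‖p - f p‖ ≤ δ := by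
    intro f hf δ hδ
    obtain ⟨i, rfl⟩ := Set.mem_range.1 ((List.mem_ofFn).1 hf)
    obtain ⟨b, hb, hdist⟩ := Metric.mem_closure_iff.1 (hv i) δ hδ
    obtain ⟨p, rfl⟩ := hb
    refine ⟨p, ?_⟩
    have e : p - That i p = (p - T i p) - v i := by
      show p - (T i p + v i) = (p - T i p) - v i
      abel
    rw [e, ← norm_sub_rev]
    rw [dist_eq_norm] at hdist
    exact le_of_lt hdist
  obtain ⟨x, hx⟩ := key (List.ofFn That) hFNE hap ε hε
  have hne : ∀ q ∈ List.ofFn (fun i => (T i, v i)), ∀ x y : X, ‖q.1 x - q.1 y‖ ≤ ‖x - y‖ := by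
    intro q hq x y
    obtain ⟨i, rfl⟩ := Set.mem_range.1 ((List.mem_ofFn).1 hq)
    exact FNE.nonexp (hT i) x y
  have hcmp := cmpFold (List.ofFn (fun i => (T i, v i))) hne x x
  have hmap1 : (List.ofFn (fun i => (T i, v i))).map (fun q => fun x => q.1 x + q.2)
      = List.ofFn That := by
    rw [List.map_ofFn]; rfl
  have hmap2 : (List.ofFn (fun i => (T i, v i))).map Prod.fst = List.ofFn T := by
    rw [List.map_ofFn]; rfl
  have hsum : ((List.ofFn (fun i => (T i, v i))).map (fun q => ‖q.2‖)).sum = ∑ i, ‖v i‖ := by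
    rw [List.map_ofFn, List.sum_ofFn]
    rfl
  rw [hmap1, hmap2, hsum, sub_self, norm_zero, zero_add] at hcmp
  refine ⟨x, ?_⟩
  have hS : compSeq m T x = foldApp (List.ofFn T) x := rfl
  rw [hS]
  calc ‖x - foldApp (List.ofFn T) x‖
      ≤ ‖x - foldApp (List.ofFn That) x‖ + ‖foldApp (List.ofFn That) x - foldApp (List.ofFn T) x‖ := by
        have := dist_triangle x (foldApp (List.ofFn That) x) (foldApp (List.ofFn T) x)
        simpa [dist_eq_norm] using this
    _ ≤ ε + ∑ i, ‖v i‖ := add_le_add hx hcmp
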